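/- Let u : ℕ → ℝ → ℝ be the family of functions defined for t < 1 by u₀(t) = t/(1−t) and the recursion u_{j+1}(t) = −u_j(t)/u_j(t−1). Then for every n ≥ 1 and every real t < 1, u_{n−1}(t) = t · ∏_{k=1}^{n} (k−t)^{(−1)^k · C(n,k)}, where the exponent (−1)^k · C(n,k) is an integer and each base k−t is positive. -/

import Mathlib

open Finset

noncomputable def gfun (n : ℕ) (t : ℝ) : ℝ :=
  t * ∏ k ∈ Finset.Icc 1 n, ((k : ℝ) - t) ^ ((-1 : ℤ) ^ k * (n.choose k : ℤ))

lemma gfun_range (n : ℕ) (t : ℝ) :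
    gfun n t = t * ∏ i ∈ Finset.range n,
      ((i : ℝ) + 1 - t) ^ ((-1 : ℤ) ^ (i+1) * (n.choose (i+1) : ℤ)) := by
  unfold gfun
  rw [← Finset.Ico_add_one_right_eq_Icc, Finset.prod_Ico_eq_prod_range]
  congr 1
  refine Finset.prod_congr rfl fun i _ => ?_
  push_cast
  ring_nf

lemma gfun_ne_zero (n : ℕ) (t : ℝ) (ht : t < 0) : gfun n t ≠ 0 := by
  rw [gfun_range]
  refine mul_ne_zero (by linarith) (Finset.prod_ne_zero_iff.2 fun i _ => ?_)
  have h0 : (0:ℝ) ≤ (i:ℝ) := Nat.cast_nonneg i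
  have : (0:ℝ) < (i:ℝ) + 1 - t := by linarith
  exact zpow_ne_zero _ (ne_of_gt this)

lemma gfun_key (n : ℕ) (t : ℝ) (ht : t < 1) :
    gfun (n+1) t = - gfun n t / gfun n (t-1) := by
  have hpos : ∀ i : ℕ, (0:ℝ) < (i:ℝ) + 1 - t := fun i => by
    have : (0:ℝ) ≤ i := Nat.cast_nonneg i
    linarith
  have hpos2 : ∀ i : ℕ, (0:ℝ) < (i:ℝ) + 2 - t := fun i => by
    have : (0:ℝ) ≤ i := Nat.cast_nonneg i
    linarith
  set A : ℝ := ∏ i ∈ Finset.range n,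
      ((i : ℝ) + 1 - t) ^ ((-1 : ℤ) ^ (i+1) * (n.choose (i+1) : ℤ)) with hA
  set Q : ℝ := ∏ i ∈ Finset.range n,
      ((i : ℝ) + 2 - t) ^ ((-1 : ℤ) ^ (i+1) * (n.choose (i+1) : ℤ)) with hQ
  have hgA : gfun n t = t * A := gfun_range n t
  have hgQ : gfun n (t-1) = (t-1) * Q := by
    rw [gfun_range]
    congr 1
    refine Finset.prod_congr rfl fun i _ => ?_
    ring_nf
  have hQne : Q ≠ 0 := Finset.prod_ne_zero_iff.2 fun i _ =>
    zpow_ne_zero _ (ne_of_gt (hpos2 i))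
  have h1t : (1:ℝ) - t ≠ 0 := by linarith
  have hLHS : gfun (n+1) t = t * (A * ((1 - t)⁻¹ * Q⁻¹)) := by
    rw [gfun_range]
    congr 1
    have hsplit : ∀ i ∈ Finset.range (n+1),
        ((i : ℝ) + 1 - t) ^ ((-1 : ℤ) ^ (i+1) * ((n+1).choose (i+1) : ℤ)) =
        ((i : ℝ) + 1 - t) ^ ((-1 : ℤ) ^ (i+1) * (n.choose (i+1) : ℤ)) *
        ((i : ℝ) + 1 - t) ^ ((-1 : ℤ) ^ (i+1) * (n.choose i : ℤ)) := by
      intro i _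
      rw [← zpow_add₀ (ne_of_gt (hpos i))]
      congr 1
      rw [Nat.choose_succ_succ]
      push_cast
      ring
    rw [Finset.prod_congr rfl hsplit, Finset.prod_mul_distrib]
    congr 1
    · -- P1 = A
      rw [Finset.prod_range_succ]
      simp [Nat.choose_succ_self]
      rfl
    · -- P2 = (1-t)⁻¹ * Q⁻¹
      rw [Finset.prod_range_succ']
      have : ∀ i ∈ Finset.range n,
          ((i : ℝ) + 1 + 1 - t) ^ ((-1 : ℤ) ^ (i+1+1) * (n.choose (i+1) : ℤ)) =
          (((i : ℝ) + 2 - t) ^ ((-1 : ℤ) ^ (i+1) * (n.choose (i+1) : ℤ)))⁻¹ := by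
        intro i _
        rw [← zpow_neg]
        congr 1
        · ring
        · ring
      rw [Finset.prod_congr rfl fun i hi => by push_cast; exact this i hi]
      rw [← Finset.prod_inv_distrib]
      simp only [Nat.cast_zero, Nat.choose_zero_right, Nat.cast_one, pow_one, zero_add]
      rw [mul_comm]
      congr 1
      norm_num [zpow_neg]
  rw [hLHS, hgA, hgQ]
  have ht1 : (t - 1 : ℝ) ≠ 0 := by linarith
  field_simp
  ring

/-- If `u : ℕ → ℝ → ℝ` satisfies `u 0 t = t/(1-t)` and the recursion
`u (j+1) t = - u j t / u j (t-1)` for all `t < 1`, then for every `n ≥ 1` and `t < 1`,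
`u (n-1) t = t * ∏_{k=1}^{n} (k - t) ^ ((-1)^k * C(n,k))` (integer power of positive base). -/
theorem forest_fire_u_formula
    (u : ℕ → ℝ → ℝ)
    (h0 : ∀ t : ℝ, t < 1 → u 0 t = t / (1 - t))
    (hrec : ∀ j : ℕ, ∀ t : ℝ, t < 1 → u (j + 1) t = - u j t / u j (t - 1)) :
    ∀ n : ℕ, 1 ≤ n → ∀ t : ℝ, t < 1 →
      u (n - 1) t =
        t * ∏ k ∈ Finset.Icc 1 n, ((k : ℝ) - t) ^ ((-1 : ℤ) ^ k * (n.choose k : ℤ)) := by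
  have H : ∀ m : ℕ, ∀ t : ℝ, t < 1 → u m t = gfun (m+1) t := by
    intro m
    induction m with
    | zero =>
      intro t ht
      rw [h0 t ht, gfun_range]
      simp [zpow_neg, div_eq_mul_inv]
    | succ m ih =>
      intro t ht
      have ht' : t - 1 < 1 := by linarith
      rw [hrec m t ht, ih t ht, ih (t-1) ht', gfun_key (m+1) t ht]
  intro n hn t ht
  have := H (n-1) t ht
  rw [Nat.sub_add_cancel hn] at this
  rw [this, gfun]
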